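/- Let β, γ ∈ ℝ. There exists C > 0 such that ‖x^{-β} 𝓛f(x)‖_{L_∞} ≤ C ‖x^{γ} f(x)‖_{L_1} holds for every f with ‖x^{γ}f‖_{L_1} < ∞ if and only if β = γ and β ≤ 0. -/

import Mathlib

open MeasureTheory Set
open scoped ENNReal

/-- The `L_p` norm (with `1 ≤ p ≤ ∞`) of a real function over a set `E ⊆ ℝ`,
as an extended nonnegative real. -/
noncomputable def Lnorm (p : ℝ≥0∞) (f : ℝ → ℝ) (E : Set ℝ) : ℝ≥0∞ :=
  if p = ∞ then essSup (fun x => ENNReal.ofReal |f x|) (volume.restrict E)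
  else (∫⁻ x in E, ENNReal.ofReal |f x| ^ p.toReal) ^ (1 / p.toReal)

lemma Lnorm_one (f : ℝ → ℝ) (E : Set ℝ) :
    Lnorm 1 f E = ∫⁻ x in E, ENNReal.ofReal |f x| := by simp [Lnorm]

lemma Lnorm_top (f : ℝ → ℝ) (E : Set ℝ) :
    Lnorm ⊤ f E = essSup (fun x => ENNReal.ofReal |f x|) (volume.restrict E) := by simp [Lnorm]

lemma essSup_lower {g : ℝ → ℝ≥0∞} {c : ℝ≥0∞} {S : Set ℝ} (hS : S ⊆ Ioi 0)
    (hSpos : 0 < volume S) (h : ∀ y ∈ S, c ≤ g y) :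
    c ≤ essSup g (volume.restrict (Ioi (0:ℝ))) := by
  by_contra hc
  push_neg at hc
  have hae := ENNReal.ae_le_essSup (μ := volume.restrict (Ioi (0:ℝ))) g
  rw [ae_iff] at hae
  have hsub : S ⊆ {y | ¬ g y ≤ essSup g (volume.restrict (Ioi (0:ℝ)))} := by
    intro y hy
    simp only [mem_setOf_eq, not_le]
    exact lt_of_lt_of_le hc (h y hy)
  have h0 : volume.restrict (Ioi (0:ℝ)) S = 0 :=
    le_antisymm (hae ▸ measure_mono hsub) zero_le
  rw [Measure.restrict_apply' measurableSet_Ioi, inter_eq_left.mpr hS] at h0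
  exact absurd h0 hSpos.ne'

lemma rpow_exp_bound {α t : ℝ} (hα : 0 ≤ α) (ht : 0 < t) :
    t ^ α * Real.exp (-t) ≤ (Nat.ceil α).factorial := by
  set n := Nat.ceil α with hn'
  have h1 : (1:ℝ) ≤ n.factorial := by exact_mod_cast Nat.one_le_iff_ne_zero.mpr n.factorial_ne_zero
  rcases le_or_gt t 1 with h | h
  · have : t ^ α * Real.exp (-t) ≤ 1 * 1 := by
      apply mul_le_mul (Real.rpow_le_one ht.le h hα) _ (Real.exp_nonneg _) zero_le_one
      rw [Real.exp_le_one_iff]; linarith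
    linarith
  · have h2 : t ^ α ≤ t ^ (n:ℝ) := Real.rpow_le_rpow_of_exponent_le h.le (Nat.le_ceil α)
    have h3 : t ^ (n:ℝ) = t ^ n := Real.rpow_natCast t n
    have h4 : t ^ n / n.factorial ≤ Real.exp t :=
      Real.pow_div_factorial_le_exp (x := t) (by linarith) n
    have h5 : t ^ n ≤ n.factorial * Real.exp t := by
      rw [div_le_iff₀ (by positivity)] at h4; linarith [h4]
    have h6 : t ^ α * Real.exp (-t) ≤ (n.factorial * Real.exp t) * Real.exp (-t) := by
      apply mul_le_mul _ le_rfl (Real.exp_nonneg _) (by positivity)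
      rw [← h3] at h5; linarith
    rwa [mul_assoc, ← Real.exp_add, add_neg_cancel, Real.exp_zero, mul_one] at h6

lemma key_bound {β x y : ℝ} (hβ : β ≤ 0) (hx : 0 < x) (hy : 0 < y) :
    y ^ (-β) * Real.exp (-(x * y)) ≤ (Nat.ceil (-β)).factorial * x ^ β := by
  have hα : 0 ≤ -β := by linarith
  have h := rpow_exp_bound hα (mul_pos hx hy)
  rw [Real.mul_rpow hx.le hy.le] at h
  have hxα : 0 < x ^ (-β) := Real.rpow_pos_of_pos hx _
  have hxβ : x ^ β = (x ^ (-β))⁻¹ := by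
    rw [← Real.rpow_neg hx.le, neg_neg]
  rw [hxβ, mul_comm ((Nat.ceil (-β)).factorial : ℝ) _, ← div_eq_inv_mul,
    le_div_iff₀ hxα]
  nlinarith [Real.exp_nonneg (-(x*y)), hxα.le, Real.rpow_pos_of_pos hy (-β)]

lemma apply_indicator {β γ : ℝ} {C : ℝ≥0∞}
    (hC : ∀ f : ℝ → ℝ, Measurable f →
        Lnorm 1 (fun x => x ^ γ * f x) (Ioi 0) < ⊤ →
        (∀ y ∈ Ioi (0 : ℝ), IntegrableOn (fun x => f x * Real.exp (-(x * y))) (Ioi 0)) →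
        Lnorm ⊤ (fun y => y ^ (-β) * ∫ x in Ioi (0 : ℝ), f x * Real.exp (-(x * y))) (Ioi 0)
          ≤ C * Lnorm 1 (fun x => x ^ γ * f x) (Ioi 0))
    {a b c d m M : ℝ} (ha : 0 ≤ a) (hab : a < b) (hc : 0 < c) (hcd : c < d)
    (hM : 0 ≤ M) (hMx : ∀ x ∈ Ioo a b, x ^ γ ≤ M) (_hm0 : 0 ≤ m)
    (hm : ∀ y ∈ Ioo c d, m ≤ y ^ (-β)) :
    ENNReal.ofReal (m * ((b - a) * Real.exp (-(b * d))))
      ≤ C * ENNReal.ofReal (M * (b - a)) := by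
  set f : ℝ → ℝ := (Ioo a b).indicator (fun _ => (1:ℝ)) with hf
  have hsub : Ioo a b ⊆ Ioi 0 := fun x hx => lt_of_le_of_lt ha hx.1
  have hfm : Measurable f := measurable_const.indicator measurableSet_Ioo
  have hind : ∀ (g : ℝ → ℝ) (x : ℝ), f x * g x = (Ioo a b).indicator g x := by
    intro g x
    by_cases h : x ∈ Ioo a b <;> simp [hf, h]
  have hL1 : Lnorm 1 (fun x => x ^ γ * f x) (Ioi 0) ≤ ENNReal.ofReal (M * (b - a)) := by
    rw [Lnorm_one]
    calc ∫⁻ x in Ioi (0:ℝ), ENNReal.ofReal |x ^ γ * f x|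
        ≤ ∫⁻ x in Ioi (0:ℝ), (Ioo a b).indicator (fun _ => ENNReal.ofReal M) x := by
          apply lintegral_mono
          intro x
          by_cases h : x ∈ Ioo a b
          · have hx0 : (0:ℝ) < x := hsub h
            simp only [hf, indicator_of_mem h, mul_one]
            exact ENNReal.ofReal_le_ofReal
              (by rw [abs_of_nonneg (Real.rpow_pos_of_pos hx0 γ).le]; exact hMx x h)
          · simp [hf, indicator_of_notMem h]
      _ ≤ ∫⁻ x, (Ioo a b).indicator (fun _ => ENNReal.ofReal M) x := setLIntegral_le_lintegral _ _
      _ = ENNReal.ofReal M * volume (Ioo a b) := lintegral_indicator_const measurableSet_Ioo _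
      _ = ENNReal.ofReal (M * (b - a)) := by
          rw [Real.volume_Ioo, ← ENNReal.ofReal_mul hM]
  have hexpint : ∀ y : ℝ, IntegrableOn (fun x => Real.exp (-(x * y))) (Ioo a b) := by
    intro y
    exact ((Real.continuous_exp.comp (by fun_prop)).integrableOn_Icc).mono_set Ioo_subset_Icc_self
  have hint : ∀ y ∈ Ioi (0 : ℝ), IntegrableOn (fun x => f x * Real.exp (-(x * y))) (Ioi 0) := by
    intro y _
    have : (fun x => f x * Real.exp (-(x * y)))
        = (Ioo a b).indicator (fun x => Real.exp (-(x * y))) := funext (hind _)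
    rw [this]
    exact ((hexpint y).integrable_indicator measurableSet_Ioo).integrableOn
  have hmain := hC f hfm (lt_of_le_of_lt hL1 (by simp)) hint
  rw [Lnorm_top] at hmain
  have hlow : ENNReal.ofReal (m * ((b - a) * Real.exp (-(b * d))))
      ≤ essSup (fun y => ENNReal.ofReal
          |y ^ (-β) * ∫ x in Ioi (0:ℝ), f x * Real.exp (-(x * y))|)
        (volume.restrict (Ioi (0:ℝ))) := by
    apply essSup_lower (S := Ioo c d) (fun y hy => lt_trans hc hy.1)
    · rw [Real.volume_Ioo]; exact ENNReal.ofReal_pos.mpr (by linarith)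
    · intro y hy
      have hy0 : (0:ℝ) < y := lt_trans hc hy.1
      have hI : (b - a) * Real.exp (-(b * d))
          ≤ ∫ x in Ioi (0:ℝ), f x * Real.exp (-(x * y)) := by
        have heq : (∫ x in Ioi (0:ℝ), f x * Real.exp (-(x * y)))
            = ∫ x in Ioo a b, Real.exp (-(x * y)) := by
          rw [show (fun x => f x * Real.exp (-(x * y)))
              = (Ioo a b).indicator (fun x => Real.exp (-(x * y))) from funext (hind _),
            setIntegral_indicator measurableSet_Ioo, inter_eq_right.mpr hsub]
        rw [heq]
        have := setIntegral_ge_of_const_le (μ := volume) (c := Real.exp (-(b * d)))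
          measurableSet_Ioo (by rw [Real.volume_Ioo]; exact ENNReal.ofReal_ne_top)
          (fun x hx => by
            apply Real.exp_le_exp.mpr
            have : x * y ≤ b * d :=
              mul_le_mul hx.2.le hy.2.le hy0.le (by linarith)
            linarith)
          (hexpint y)
        rwa [Real.volume_real_Ioo_of_le hab.le, smul_eq_mul] at this
      apply ENNReal.ofReal_le_ofReal
      refine le_trans ?_ (le_abs_self _)
      have hyβ : 0 ≤ y ^ (-β) := (Real.rpow_pos_of_pos hy0 _).le
      exact mul_le_mul (hm y hy) hI (mul_nonneg (by linarith) (Real.exp_nonneg _)) hyβ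
  calc ENNReal.ofReal (m * ((b - a) * Real.exp (-(b * d))))
      ≤ _ := hlow
    _ ≤ C * Lnorm 1 (fun x => x ^ γ * f x) (Ioi 0) := hmain
    _ ≤ C * ENNReal.ofReal (M * (b - a)) := mul_le_mul_right hL1 C

/-- Characterization of the power-weighted inequality
`‖x^{-β} 𝓛f‖_{L_∞} ≤ C ‖x^{γ} f‖_{L_1}` for the Laplace transform:
it holds iff `β = γ` and `β ≤ 0`. -/
theorem laplace_power_weights_characterization_one_infinity (β γ : ℝ) :
    (∃ C : ℝ≥0∞, 0 < C ∧ C ≠ ⊤ ∧ ∀ f : ℝ → ℝ, Measurable f →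
        Lnorm 1 (fun x => x ^ γ * f x) (Ioi 0) < ⊤ →
        (∀ y ∈ Ioi (0 : ℝ), IntegrableOn (fun x => f x * Real.exp (-(x * y))) (Ioi 0)) →
        Lnorm ⊤ (fun y => y ^ (-β) * ∫ x in Ioi (0 : ℝ), f x * Real.exp (-(x * y))) (Ioi 0)
          ≤ C * Lnorm 1 (fun x => x ^ γ * f x) (Ioi 0)) ↔
      (β = γ ∧ β ≤ 0) := by
  constructor
  · rintro ⟨C, hCpos, hCtop, hC⟩
    set K := C.toReal with hK
    have hK0 : 0 ≤ K := ENNReal.toReal_nonneg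
    have hconv : ∀ {u v : ℝ}, 0 ≤ v → ENNReal.ofReal u ≤ C * ENNReal.ofReal v →
        u ≤ K * v := by
      intro u v hv h
      have he : C * ENNReal.ofReal v = ENNReal.ofReal (K * v) := by
        rw [ENNReal.ofReal_mul hK0, ENNReal.ofReal_toReal hCtop]
      rw [he] at h
      exact (ENNReal.ofReal_le_ofReal_iff (by positivity)).mp h
    have hβγ : β = γ := by
      by_contra hne
      have hmin : 0 < min 1 ((2:ℝ) ^ β) := lt_min one_pos (Real.rpow_pos_of_pos two_pos β)
      have hmax : 0 < max 1 ((2:ℝ) ^ γ) := lt_of_lt_of_le one_pos (le_max_left _ _)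
      set K2 := K * max 1 ((2:ℝ)^γ) * Real.exp 2 / min 1 ((2:ℝ)^β) with hK2
      have hK20 : 0 ≤ K2 := by positivity
      have hbound : ∀ a : ℝ, 0 < a → a ^ (β - γ) ≤ K2 := by
        intro a ha
        have h2a : a < 2 * a := by linarith
        have hinva : (0:ℝ) < 1/(2*a) := by positivity
        have hinv : 1/(2*a) < 1/a := one_div_lt_one_div_of_lt ha h2a
        have hMx : ∀ x ∈ Ioo a (2*a), x ^ γ ≤ a^γ * max 1 ((2:ℝ)^γ) := by
          intro x hx
          rcases le_or_gt 0 γ with hγ | hγ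
          · calc x ^ γ ≤ (2*a) ^ γ :=
                  Real.rpow_le_rpow (by linarith [hx.1]) hx.2.le hγ
              _ = 2^γ * a^γ := Real.mul_rpow (by norm_num) ha.le
              _ ≤ a^γ * max 1 ((2:ℝ)^γ) := by
                  rw [mul_comm]
                  exact mul_le_mul_of_nonneg_left (le_max_right _ _)
                    (Real.rpow_nonneg ha.le γ)
          · calc x ^ γ ≤ a ^ γ := Real.rpow_le_rpow_of_nonpos ha hx.1.le hγ.le
              _ ≤ a^γ * max 1 ((2:ℝ)^γ) :=
                  le_mul_of_one_le_right (Real.rpow_nonneg ha.le γ) (le_max_left _ _)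
        have hm : ∀ y ∈ Ioo (1/(2*a)) (1/a), a^β * min 1 ((2:ℝ)^β) ≤ y ^ (-β) := by
          intro y hy
          have hy0 : (0:ℝ) < y := lt_trans hinva hy.1
          rcases le_or_gt β 0 with hβ' | hβ'
          · have h1 : (1/(2*a)) ^ (-β) ≤ y ^ (-β) :=
              Real.rpow_le_rpow (by positivity) hy.1.le (by linarith)
            have h2 : (1/(2*a)) ^ (-β) = (2*a) ^ β := by
              rw [one_div, Real.inv_rpow (by positivity), Real.rpow_neg (by positivity),
                inv_inv]
            calc a^β * min 1 ((2:ℝ)^β)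
                ≤ a^β * (2:ℝ)^β := mul_le_mul_of_nonneg_left (min_le_right _ _)
                    (Real.rpow_nonneg ha.le β)
              _ = (2*a) ^ β := by rw [mul_comm ((a:ℝ)^β) _, ← Real.mul_rpow (by norm_num) ha.le]
              _ ≤ y ^ (-β) := h2 ▸ h1
          · have h1 : (1/a) ^ (-β) ≤ y ^ (-β) :=
              Real.rpow_le_rpow_of_nonpos hy0 hy.2.le (by linarith)
            have h2 : (1/a) ^ (-β) = a ^ β := by
              rw [one_div, Real.inv_rpow ha.le, Real.rpow_neg ha.le, inv_inv]
            calc a^β * min 1 ((2:ℝ)^β)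
                ≤ a^β * 1 := mul_le_mul_of_nonneg_left (min_le_left _ _)
                    (Real.rpow_nonneg ha.le β)
              _ = a ^ β := mul_one _
              _ ≤ y ^ (-β) := h2 ▸ h1
        have h := apply_indicator hC (a := a) (b := 2*a) (c := 1/(2*a)) (d := 1/a)
          (m := a^β * min 1 ((2:ℝ)^β)) (M := a^γ * max 1 ((2:ℝ)^γ))
          ha.le h2a hinva hinv (by positivity) hMx (by positivity) hm
        have h' := hconv (mul_nonneg (by positivity) (by linarith)) h
        have e1 : 2*a - a = a := by ring
        have e2 : 2*a * (1/a) = 2 := by field_simp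
        rw [e1, e2] at h'
        have hexp : Real.exp (-2) * Real.exp 2 = 1 := by
          rw [← Real.exp_add]; norm_num
        rw [Real.rpow_sub ha, div_le_iff₀ (Real.rpow_pos_of_pos ha γ), hK2,
          div_mul_eq_mul_div, le_div_iff₀ hmin]
        refine le_of_mul_le_mul_right ?_ ha
        calc a ^ β * min 1 ((2:ℝ)^β) * a
            = (a^β * min 1 ((2:ℝ)^β) * (a * Real.exp (-2))) * Real.exp 2 := by
              linear_combination (-(a^β * min 1 ((2:ℝ)^β) * a)) * hexp
          _ ≤ (K * (a^γ * max 1 ((2:ℝ)^γ) * a)) * Real.exp 2 :=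
              mul_le_mul_of_nonneg_right h' (Real.exp_nonneg 2)
          _ = K * max 1 ((2:ℝ)^γ) * Real.exp 2 * a^γ * a := by ring
      have hne' : β - γ ≠ 0 := sub_ne_zero.mpr hne
      have ha0pos : (0:ℝ) < (K2+1) ^ (1/(β-γ)) := Real.rpow_pos_of_pos (by linarith) _
      have hb := hbound _ ha0pos
      rw [← Real.rpow_mul (by linarith), one_div, inv_mul_cancel₀ hne', Real.rpow_one] at hb
      linarith
    refine ⟨hβγ, ?_⟩
    by_contra hβpos
    push_neg at hβpos
    subst hβγ
    set T := K * Real.exp 1 + 2 with hT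
    have hKe : 0 ≤ K * Real.exp 1 := mul_nonneg hK0 (Real.exp_nonneg 1)
    have hT1 : 1 < T := by linarith
    set δ := T ^ (-(1/β)) with hδ
    have hδ0 : 0 < δ := Real.rpow_pos_of_pos (by linarith) _
    have hδ1 : δ < 1 := Real.rpow_lt_one_of_one_lt_of_neg hT1
      (neg_lt_zero.mpr (one_div_pos.mpr hβpos))
    have hδβ : δ ^ (-β) = T := by
      rw [hδ, ← Real.rpow_mul (by linarith)]
      rw [show (-(1/β)) * (-β) = 1 by
        rw [neg_mul_neg, one_div, inv_mul_cancel₀ (ne_of_gt hβpos)], Real.rpow_one]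
    have hMx : ∀ x ∈ Ioo (0:ℝ) 1, x ^ β ≤ 1 :=
      fun x hx => Real.rpow_le_one hx.1.le hx.2.le hβpos.le
    have hm : ∀ y ∈ Ioo (δ/2) δ, δ ^ (-β) ≤ y ^ (-β) := by
      intro y hy
      have hy0 : (0:ℝ) < y := lt_trans (by linarith) hy.1
      exact Real.rpow_le_rpow_of_nonpos hy0 hy.2.le (by linarith)
    have h := apply_indicator hC (a := 0) (b := 1) (c := δ/2) (d := δ)
      (m := δ^(-β)) (M := 1)
      le_rfl one_pos (by linarith) (by linarith) zero_le_one hMx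
      (Real.rpow_nonneg hδ0.le _) hm
    have h' := hconv (by norm_num) h
    rw [hδβ] at h'
    -- h' : T * ((1 - 0) * Real.exp (-(1 * δ))) ≤ K * (1 * (1 - 0))
    have hexpδ : Real.exp (-1) ≤ Real.exp (-(1*δ)) := Real.exp_le_exp.mpr (by linarith)
    have h2 : T * Real.exp (-1) ≤ K := by nlinarith [Real.exp_nonneg (-(1:ℝ))]
    have hKe1 : Real.exp (-1) * Real.exp 1 = 1 := by rw [← Real.exp_add]; norm_num
    have h3 : T * Real.exp (-1) * Real.exp 1 ≤ K * Real.exp 1 :=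
      mul_le_mul_of_nonneg_right h2 (Real.exp_nonneg 1)
    rw [mul_assoc, hKe1, mul_one] at h3
    rw [hT] at h3
    linarith
  · rintro ⟨hβγ, hβ0⟩
    subst hβγ
    refine ⟨(((Nat.ceil (-β)).factorial : ℕ) : ℝ≥0∞),
      by exact_mod_cast (Nat.ceil (-β)).factorial_pos, by simp, ?_⟩
    intro f hf _ hint
    rw [Lnorm_top, Lnorm_one]
    refine essSup_le_of_ae_le _ ?_
    filter_upwards [ae_restrict_mem measurableSet_Ioi] with y hy
    have hy0 : (0:ℝ) < y := hy
    have hyb : 0 ≤ y ^ (-β) := (Real.rpow_pos_of_pos hy0 _).le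
    calc ENNReal.ofReal |y ^ (-β) * ∫ x in Ioi (0:ℝ), f x * Real.exp (-(x * y))|
        = ENNReal.ofReal (y ^ (-β)) *
          ENNReal.ofReal |∫ x in Ioi (0:ℝ), f x * Real.exp (-(x * y))| := by
          rw [abs_mul, abs_of_nonneg hyb, ENNReal.ofReal_mul hyb]
      _ ≤ ENNReal.ofReal (y ^ (-β)) *
          ∫⁻ x in Ioi (0:ℝ), ENNReal.ofReal |f x * Real.exp (-(x * y))| := by
          gcongr
          rw [← Real.enorm_eq_ofReal_abs]
          refine (enorm_integral_le_lintegral_enorm _).trans_eq ?_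
          simp_rw [← Real.enorm_eq_ofReal_abs]
      _ = ∫⁻ x in Ioi (0:ℝ),
            ENNReal.ofReal (y ^ (-β)) * ENNReal.ofReal |f x * Real.exp (-(x * y))| := by
          rw [lintegral_const_mul' _ _ ENNReal.ofReal_ne_top]
      _ ≤ ∫⁻ x in Ioi (0:ℝ),
            (((Nat.ceil (-β)).factorial : ℕ) : ℝ≥0∞) * ENNReal.ofReal |x ^ β * f x| := by
          refine setLIntegral_mono_ae (by fun_prop) ?_
          filter_upwards [] with x hx
          have hx0 : (0:ℝ) < x := hx
          rw [← ENNReal.ofReal_mul hyb, ← ENNReal.ofReal_natCast,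
            ← ENNReal.ofReal_mul (by positivity)]
          apply ENNReal.ofReal_le_ofReal
          rw [abs_mul, abs_mul, Real.abs_exp, abs_of_nonneg (Real.rpow_pos_of_pos hx0 β).le]
          calc y ^ (-β) * (|f x| * Real.exp (-(x*y)))
              = (y ^ (-β) * Real.exp (-(x*y))) * |f x| := by ring
            _ ≤ ((Nat.ceil (-β)).factorial * x ^ β) * |f x| :=
                mul_le_mul_of_nonneg_right (key_bound hβ0 hx0 hy0) (abs_nonneg _)
            _ = (Nat.ceil (-β)).factorial * (x ^ β * |f x|) := by ring
      _ = (((Nat.ceil (-β)).factorial : ℕ) : ℝ≥0∞) *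
            ∫⁻ x in Ioi (0:ℝ), ENNReal.ofReal |x ^ β * f x| := by
          rw [lintegral_const_mul' _ _ (by simp)]
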